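/- For an integrable real-valued random variable X and α ∈ (0,1), the function y ↦ y − (1/α)·E[max(y − X, 0)] attains its maximum over ℝ at any α-quantile y* of X, and the maximum value equals (1/α)∫₀^α VaR_β[X] dβ (the CVaR variational representation of Rockafellar–Uryasev). -/

import Mathlib

open MeasureTheory Set

/-- Lower `α`-quantile (Value-at-Risk) of a random variable `X` under measure `μ`:
the generalized inverse of the CDF. -/
noncomputable def VaR {Ω : Type*} [MeasurableSpace Ω] (μ : Measure Ω)
    (X : Ω → ℝ) (β : ℝ) : ℝ :=
  sInf {x : ℝ | β ≤ (μ {ω | X ω ≤ x}).toReal}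

section Aux

open Filter Topology ENNReal NNReal

variable {Ω : Type*} [MeasurableSpace Ω] {μ : Measure Ω} [IsProbabilityMeasure μ]
  {X : Ω → ℝ}

private lemma cdf_mono {s t : ℝ} (h : s ≤ t) :
    (μ {ω | X ω ≤ s}).toReal ≤ (μ {ω | X ω ≤ t}).toReal :=
  ENNReal.toReal_mono (measure_ne_top _ _)
    (measure_mono fun ω hω => le_trans hω h)

private lemma cdf_right_cont (hX : Measurable X) {β c : ℝ}
    (h : ∀ ε > (0:ℝ), β ≤ (μ {ω | X ω ≤ c + ε}).toReal) :
    β ≤ (μ {ω | X ω ≤ c}).toReal := by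
  set s : ℕ → Set Ω := fun n => {ω | X ω ≤ c + 1/(n+1)} with hs_def
  have hs : ∀ n, MeasurableSet (s n) := fun n => hX measurableSet_Iic
  have hanti : Antitone s := by
    intro m n hmn ω hω
    simp only [hs_def, mem_setOf_eq] at hω ⊢
    have h1 : (1:ℝ)/(n+1) ≤ 1/(m+1) := by
      apply one_div_le_one_div_of_le (by positivity)
      have : (m:ℝ) ≤ n := Nat.cast_le.2 hmn
      linarith
    linarith
  have hiInter : ⋂ n, s n = {ω | X ω ≤ c} := by
    ext ω
    simp only [mem_iInter, hs_def, mem_setOf_eq]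
    constructor
    · intro hω
      by_contra hc
      push_neg at hc
      obtain ⟨n, hn⟩ := exists_nat_one_div_lt (sub_pos.2 hc)
      exact absurd (hω n) (by push_cast; push_cast at hn; linarith)
    · intro hω n
      have : (0:ℝ) < 1/(n+1) := by positivity
      linarith
  have htend := tendsto_measure_iInter_atTop
    (fun n => (hs n).nullMeasurableSet) hanti ⟨0, measure_ne_top μ _⟩
  rw [hiInter] at htend
  have h2 : Tendsto (fun n => (μ (s n)).toReal) atTop
      (𝓝 ((μ {ω | X ω ≤ c}).toReal)) :=
    (ENNReal.tendsto_toReal (measure_ne_top μ _)).comp htend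
  exact ge_of_tendsto h2 (Eventually.of_forall fun n => h _ (by positivity))

private lemma cdf_exists_ge (hX : Measurable X) {β : ℝ} (hβ1 : β < 1) :
    ∃ x : ℝ, β ≤ (μ {ω | X ω ≤ x}).toReal := by
  set s : ℕ → Set Ω := fun n => {ω | X ω ≤ (n:ℝ)} with hs_def
  have hmono : Monotone s := by
    intro m n hmn ω hω
    simp only [hs_def, mem_setOf_eq] at hω ⊢
    have : (m:ℝ) ≤ n := Nat.cast_le.2 hmn
    linarith
  have hiUnion : ⋃ n, s n = univ := by
    ext ω
    simp only [mem_iUnion, hs_def, mem_setOf_eq, mem_univ, iff_true]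
    obtain ⟨n, hn⟩ := exists_nat_ge (X ω)
    exact ⟨n, hn⟩
  have htend := tendsto_measure_iUnion_atTop (μ := μ) hmono
  rw [hiUnion, measure_univ] at htend
  have h2 : Tendsto (fun n => (μ (s n)).toReal) atTop (𝓝 (1:ℝ)) := by
    have := (ENNReal.tendsto_toReal (by norm_num : (1:ℝ≥0∞) ≠ ⊤)).comp htend
    simpa [Function.comp_def] using this
  obtain ⟨n, hn⟩ := (h2.eventually (eventually_gt_nhds hβ1)).exists
  exact ⟨n, hn.le⟩

private lemma cdf_exists_lt (hX : Measurable X) {β : ℝ} (hβ0 : 0 < β) :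
    ∃ x : ℝ, (μ {ω | X ω ≤ x}).toReal < β := by
  set s : ℕ → Set Ω := fun n => {ω | X ω ≤ -(n:ℝ)} with hs_def
  have hs : ∀ n, MeasurableSet (s n) := fun n => hX measurableSet_Iic
  have hanti : Antitone s := by
    intro m n hmn ω hω
    simp only [hs_def, mem_setOf_eq] at hω ⊢
    have : (m:ℝ) ≤ n := Nat.cast_le.2 hmn
    linarith
  have hiInter : ⋂ n, s n = ∅ := by
    ext ω
    simp only [mem_iInter, hs_def, mem_setOf_eq, mem_empty_iff_false, iff_false]
    push_neg
    obtain ⟨n, hn⟩ := exists_nat_gt (-X ω)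
    exact ⟨n, by linarith⟩
  have htend := tendsto_measure_iInter_atTop
    (fun n => (hs n).nullMeasurableSet) hanti ⟨0, measure_ne_top μ _⟩
  rw [hiInter, measure_empty] at htend
  have h2 : Tendsto (fun n => (μ (s n)).toReal) atTop (𝓝 (0:ℝ)) := by
    have := (ENNReal.tendsto_toReal (by norm_num : (0:ℝ≥0∞) ≠ ⊤)).comp htend
    simpa [Function.comp_def] using this
  obtain ⟨n, hn⟩ := (h2.eventually (eventually_lt_nhds hβ0)).exists
  exact ⟨-n, hn⟩

private lemma bddBelow_var_set (hX : Measurable X) {β : ℝ} (hβ0 : 0 < β) :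
    BddBelow {x : ℝ | β ≤ (μ {ω | X ω ≤ x}).toReal} := by
  obtain ⟨x₀, hx₀⟩ := cdf_exists_lt (μ := μ) (X := X) hX hβ0
  refine ⟨x₀, fun x hx => ?_⟩
  by_contra hc
  push_neg at hc
  exact absurd (le_trans hx (cdf_mono hc.le)) (not_le.2 hx₀)

private lemma VaR_le_iff (hX : Measurable X) {β s : ℝ} (hβ0 : 0 < β) (hβ1 : β < 1) :
    VaR μ X β ≤ s ↔ β ≤ (μ {ω | X ω ≤ s}).toReal := by
  constructor
  · intro h
    have key : β ≤ (μ {ω | X ω ≤ VaR μ X β}).toReal := by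
      apply cdf_right_cont hX
      intro ε hε
      have hne : Set.Nonempty {x : ℝ | β ≤ (μ {ω | X ω ≤ x}).toReal} :=
        cdf_exists_ge (μ := μ) (X := X) hX hβ1
      have hlt : sInf {x : ℝ | β ≤ (μ {ω | X ω ≤ x}).toReal} < VaR μ X β + ε :=
        lt_add_of_pos_right _ hε
      obtain ⟨x, hxS, hx⟩ := exists_lt_of_csInf_lt hne hlt
      exact le_trans hxS (cdf_mono hx.le)
    exact le_trans key (cdf_mono h)
  · intro h
    exact csInf_le (bddBelow_var_set hX hβ0) h

/-- Layer-cake type swap lemma. -/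
private lemma swap_lemma {Ω' : Type*} [MeasurableSpace Ω'] (ν : Measure Ω') [SFinite ν]
    (g : Ω' → ℝ) (hg : Measurable g) (c : ℝ) :
    ∫⁻ ω, ENNReal.ofReal (c - g ω) ∂ν = ∫⁻ s in Iio c, ν {ω | g ω ≤ s} := by
  set A : Set (Ω' × ℝ) := {p | g p.1 ≤ p.2 ∧ p.2 < c} with hA_def
  have hA : MeasurableSet A :=
    (measurableSet_le (hg.comp measurable_fst) measurable_snd).inter
      (measurableSet_lt measurable_snd measurable_const)
  have step1 : ∀ ω, ENNReal.ofReal (c - g ω)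
      = ∫⁻ s, A.indicator 1 (ω, s) := by
    intro ω
    have : (fun s => A.indicator (1 : Ω' × ℝ → ℝ≥0∞) (ω, s))
        = (Ico (g ω) c).indicator 1 := by
      funext s
      simp only [Set.indicator_apply, hA_def, mem_setOf_eq, mem_Ico, Pi.one_apply]
    rw [this, lintegral_indicator_one measurableSet_Ico, Real.volume_Ico]
  have step2 : ∀ s, (∫⁻ ω, A.indicator 1 (ω, s) ∂ν)
      = (Iio c).indicator (fun s => ν {ω | g ω ≤ s}) s := by
    intro s
    by_cases hs : s < c
    · have : (fun ω => A.indicator (1 : Ω' × ℝ → ℝ≥0∞) (ω, s))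
          = ({ω | g ω ≤ s}).indicator 1 := by
        funext ω
        simp only [Set.indicator_apply, hA_def, mem_setOf_eq, Pi.one_apply, hs, and_true]
      rw [this, lintegral_indicator_one
          (show MeasurableSet {ω | g ω ≤ s} from hg measurableSet_Iic),
        Set.indicator_of_mem (show s ∈ Iio c from hs)]
    · have : (fun ω => A.indicator (1 : Ω' × ℝ → ℝ≥0∞) (ω, s))
          = fun _ => 0 := by
        funext ω
        simp only [Set.indicator_apply, hA_def, mem_setOf_eq, Pi.one_apply, hs, and_false,
          if_false]
      rw [this, lintegral_zero,
        Set.indicator_of_notMem (show s ∉ Iio c from hs)]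
  have huncurry : AEMeasurable
      (Function.uncurry fun (ω : Ω') (s : ℝ) => A.indicator (1 : Ω' × ℝ → ℝ≥0∞) (ω, s))
      (ν.prod volume) := by
    have : Function.uncurry (fun (ω : Ω') (s : ℝ) => A.indicator (1 : Ω' × ℝ → ℝ≥0∞) (ω, s))
        = A.indicator 1 := by
      funext p; rfl
    rw [this]
    exact (measurable_one.indicator hA).aemeasurable
  have hswap := lintegral_lintegral_swap huncurry
  calc ∫⁻ ω, ENNReal.ofReal (c - g ω) ∂ν
      = ∫⁻ ω, (∫⁻ s, A.indicator 1 (ω, s)) ∂ν := by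
        exact lintegral_congr step1
    _ = ∫⁻ s, (∫⁻ ω, A.indicator 1 (ω, s) ∂ν) := hswap
    _ = ∫⁻ s, (Iio c).indicator (fun s => ν {ω | g ω ≤ s}) s := lintegral_congr step2
    _ = ∫⁻ s in Iio c, ν {ω | g ω ≤ s} := lintegral_indicator measurableSet_Iio _

end Aux

/-- Rockafellar–Uryasev variational representation of CVaR.
For an integrable random variable `X` and `α ∈ (0,1)`, the function
`y ↦ y − (1/α)·E[(y − X)⁺]` attains its maximum over `ℝ` at any `α`-quantile `y*`
of `X`, and the maximum value equals `(1/α)∫₀^α VaR_β[X] dβ`. -/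
theorem cvar_variational_representation
    {Ω : Type*} [MeasurableSpace Ω] (μ : Measure Ω) [IsProbabilityMeasure μ]
    (X : Ω → ℝ) (hX : Measurable X) (hXint : Integrable X μ)
    (α : ℝ) (hα : α ∈ Set.Ioo (0:ℝ) 1) (ystar : ℝ)
    (hq1 : α ≤ (μ {ω | X ω ≤ ystar}).toReal)
    (hq2 : 1 - α ≤ (μ {ω | ystar ≤ X ω}).toReal) :
    (∀ y : ℝ, y - (1 / α) * ∫ ω, max (y - X ω) 0 ∂μ ≤
        ystar - (1 / α) * ∫ ω, max (ystar - X ω) 0 ∂μ) ∧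
    ystar - (1 / α) * ∫ ω, max (ystar - X ω) 0 ∂μ =
        (1 / α) * ∫ β in (0:ℝ)..α, VaR μ X β := by
  obtain ⟨hα0, hα1⟩ := hα
  -- Integrability of the positive parts
  have hmax_int : ∀ y : ℝ, Integrable (fun ω => max (y - X ω) 0) μ := by
    intro y
    have : (fun ω => max (y - X ω) 0)
        = ((fun ω => y - X ω) ⊔ (fun _ => 0)) := by
      funext ω; rfl
    rw [this]
    exact ((integrable_const y).sub hXint).sup (integrable_const 0)
  constructor
  · -- Part 1: maximality
    intro y
    rcases le_total ystar y with hy | hy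
    · -- case ystar ≤ y
      have hpt : ∀ ω, max (ystar - X ω) 0
          + ({ω | X ω ≤ ystar}).indicator (fun _ => y - ystar) ω ≤ max (y - X ω) 0 := by
        intro ω
        by_cases h : X ω ≤ ystar
        · rw [Set.indicator_of_mem (show ω ∈ {ω | X ω ≤ ystar} from h)]
          rw [max_eq_left (by linarith), max_eq_left (by linarith)]
          ring_nf; linarith
        · rw [Set.indicator_of_notMem (show ω ∉ {ω | X ω ≤ ystar} from h), add_zero]
          push_neg at h
          rw [max_eq_right (by linarith)]
          exact le_max_right _ _
      have hind_int : Integrable (({ω | X ω ≤ ystar}).indicator (fun _ => y - ystar)) μ :=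
        (integrable_const (y - ystar)).indicator (hX measurableSet_Iic)
      have key : (∫ ω, max (ystar - X ω) 0 ∂μ)
          + (μ {ω | X ω ≤ ystar}).toReal * (y - ystar) ≤ ∫ ω, max (y - X ω) 0 ∂μ := by
        have h1 : ∫ ω, (max (ystar - X ω) 0
            + ({ω | X ω ≤ ystar}).indicator (fun _ => y - ystar) ω) ∂μ
            ≤ ∫ ω, max (y - X ω) 0 ∂μ :=
          integral_mono ((hmax_int ystar).add hind_int) (hmax_int y) hpt
        rwa [integral_add (hmax_int ystar) hind_int,
          integral_indicator_const (y - ystar)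
            (show MeasurableSet {ω | X ω ≤ ystar} from hX measurableSet_Iic),
          smul_eq_mul] at h1
      have hFge : α ≤ (μ {ω | X ω ≤ ystar}).toReal := hq1
      have hF1 : (μ {ω | X ω ≤ ystar}).toReal ≤ 1 := by
        rw [show (1:ℝ) = (μ (univ : Set Ω)).toReal by simp]
        exact ENNReal.toReal_mono (measure_ne_top _ _) (measure_mono (subset_univ _))
      set My := ∫ ω, max (y - X ω) 0 ∂μ
      set Ms := ∫ ω, max (ystar - X ω) 0 ∂μ
      rw [div_mul_eq_mul_div, div_mul_eq_mul_div, sub_div' (ne_of_gt hα0),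
        sub_div' (ne_of_gt hα0), div_le_div_iff_of_pos_right hα0]
      nlinarith [mul_le_mul_of_nonneg_left hFge (sub_nonneg.2 hy)]
    · -- case y ≤ ystar
      have hpt : ∀ ω, max (ystar - X ω) 0 ≤ max (y - X ω) 0
          + ({ω | ¬ ystar ≤ X ω}).indicator (fun _ => ystar - y) ω := by
        intro ω
        by_cases h : ystar ≤ X ω
        · rw [Set.indicator_of_notMem (by simpa using h), add_zero,
            max_eq_right (by linarith)]
          exact le_max_right _ _
        · rw [Set.indicator_of_mem (by simpa using h)]
          push_neg at h
          rw [max_eq_left (by linarith)]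
          have : y - X ω ≤ max (y - X ω) 0 := le_max_left _ _
          linarith
      have hmeas_lt : MeasurableSet {ω | ¬ ystar ≤ X ω} := by
        have : {ω | ¬ ystar ≤ X ω} = {ω | ystar ≤ X ω}ᶜ := rfl
        rw [this]
        exact (hX measurableSet_Ici).compl
      have hind_int : Integrable (({ω | ¬ ystar ≤ X ω}).indicator (fun _ => ystar - y)) μ :=
        (integrable_const (ystar - y)).indicator hmeas_lt
      have key : (∫ ω, max (ystar - X ω) 0 ∂μ) ≤ (∫ ω, max (y - X ω) 0 ∂μ)
          + (μ {ω | ¬ ystar ≤ X ω}).toReal * (ystar - y) := by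
        have h1 : ∫ ω, max (ystar - X ω) 0 ∂μ
            ≤ ∫ ω, (max (y - X ω) 0
              + ({ω | ¬ ystar ≤ X ω}).indicator (fun _ => ystar - y) ω) ∂μ :=
          integral_mono (hmax_int ystar) ((hmax_int y).add hind_int) hpt
        rwa [integral_add (hmax_int y) hind_int,
          integral_indicator_const (ystar - y) hmeas_lt, smul_eq_mul] at h1
      have hGle : (μ {ω | ¬ ystar ≤ X ω}).toReal ≤ α := by
        have hcompl : {ω | ¬ ystar ≤ X ω} = {ω | ystar ≤ X ω}ᶜ := rfl
        have h1 : μ {ω | ¬ ystar ≤ X ω} = 1 - μ {ω | ystar ≤ X ω} := by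
          rw [hcompl, measure_compl
            (show MeasurableSet {ω | ystar ≤ X ω} from hX measurableSet_Ici)
            (measure_ne_top _ _), measure_univ]
        rw [h1, ENNReal.toReal_sub_of_le prob_le_one (by norm_num)]
        simp only [ENNReal.toReal_one]
        linarith
      have hG0 : 0 ≤ (μ {ω | ¬ ystar ≤ X ω}).toReal := ENNReal.toReal_nonneg
      set My := ∫ ω, max (y - X ω) 0 ∂μ
      set Ms := ∫ ω, max (ystar - X ω) 0 ∂μ
      rw [div_mul_eq_mul_div, div_mul_eq_mul_div, sub_div' (ne_of_gt hα0),
        sub_div' (ne_of_gt hα0), div_le_div_iff_of_pos_right hα0]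
      nlinarith [mul_le_mul_of_nonneg_right hGle (sub_nonneg.2 hy)]
  · -- Part 2: the value equals (1/α)∫₀^α VaR
    -- the measurable substitute for VaR on (0, α]
    set f : ℝ → ℝ := fun β => if β ∈ Ioc 0 α then VaR μ X β else ystar with hf_def
    have hVaR_le : ∀ β ∈ Ioc (0:ℝ) α, VaR μ X β ≤ ystar := by
      intro β hβ
      exact csInf_le (bddBelow_var_set hX hβ.1) (le_trans hβ.2 hq1)
    have hf_iff : ∀ s : ℝ, ∀ β, (f β ≤ s ↔
        (β ∈ Ioc 0 α ∧ β ≤ (μ {ω | X ω ≤ s}).toReal) ∨ (β ∉ Ioc 0 α ∧ ystar ≤ s)) := by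
      intro s β
      by_cases hβ : β ∈ Ioc 0 α
      · simp only [hf_def, if_pos hβ, hβ, not_true_eq_false, false_and, or_false,
          true_and]
        exact VaR_le_iff hX hβ.1 (lt_of_le_of_lt hβ.2 hα1)
      · rw [hf_def]
        simp only [mem_Ioc] at hβ ⊢
        rw [if_neg hβ]
        simp [hβ]
    have hf_meas : Measurable f := by
      apply measurable_of_Iic
      intro s
      have : f ⁻¹' Iic s = (Ioc 0 α ∩ Iic ((μ {ω | X ω ≤ s}).toReal))
          ∪ (if ystar ≤ s then (Ioc 0 α)ᶜ else ∅) := by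
        ext β
        simp only [mem_preimage, mem_Iic, hf_iff s β, mem_union, mem_inter_iff]
        by_cases h : ystar ≤ s <;> simp [h]
      rw [this]
      refine (measurableSet_Ioc.inter measurableSet_Iic).union ?_
      split <;> simp [measurableSet_Ioc.compl]
    -- the common lintegral value
    have hF_le_α : ∀ s < ystar, (μ {ω | X ω ≤ s}).toReal ≤ α := by
      intro s hs
      have hsub : {ω | X ω ≤ s} ⊆ {ω | ystar ≤ X ω}ᶜ := by
        intro ω hω
        simp only [mem_compl_iff, mem_setOf_eq, not_le]
        exact lt_of_le_of_lt hω hs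
      have h1 : (μ {ω | X ω ≤ s}).toReal ≤ (μ ({ω | ystar ≤ X ω}ᶜ)).toReal :=
        ENNReal.toReal_mono (measure_ne_top _ _) (measure_mono hsub)
      have h2 : μ ({ω | ystar ≤ X ω}ᶜ) = 1 - μ {ω | ystar ≤ X ω} := by
        rw [measure_compl
          (show MeasurableSet {ω | ystar ≤ X ω} from hX measurableSet_Ici)
          (measure_ne_top _ _), measure_univ]
      rw [h2, ENNReal.toReal_sub_of_le prob_le_one (by norm_num)] at h1
      simp only [ENNReal.toReal_one] at h1
      linarith
    have hcalcA : ∫⁻ ω, ENNReal.ofReal (max (ystar - X ω) 0) ∂μ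
        = ∫⁻ s in Iio ystar, μ {ω | X ω ≤ s} := by
      have : ∀ ω, ENNReal.ofReal (max (ystar - X ω) 0) = ENNReal.ofReal (ystar - X ω) := by
        intro ω
        rcases le_total (ystar - X ω) 0 with h | h
        · rw [max_eq_right h, ENNReal.ofReal_zero, ENNReal.ofReal_eq_zero.2 h]
        · rw [max_eq_left h]
      rw [lintegral_congr this]
      exact swap_lemma μ X hX ystar
    have hcalcB : ∫⁻ β in Ioc 0 α, ENNReal.ofReal (ystar - f β)
        = ∫⁻ s in Iio ystar, μ {ω | X ω ≤ s} := by
      rw [swap_lemma (volume.restrict (Ioc 0 α)) f hf_meas ystar]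
      apply setLIntegral_congr_fun measurableSet_Iio
      intro s hs
      beta_reduce
      rw [Measure.restrict_apply
        (show MeasurableSet {β | f β ≤ s} from hf_meas measurableSet_Iic)]
      have hset : f ⁻¹' Iic s ∩ Ioc 0 α = Ioc 0 ((μ {ω | X ω ≤ s}).toReal) := by
        ext β
        simp only [mem_inter_iff, mem_preimage, mem_Iic, mem_Ioc, hf_iff s β]
        constructor
        · rintro ⟨h1 | h1, h2⟩
          · exact ⟨h2.1, h1.2⟩
          · exact absurd h2 h1.1
        · rintro ⟨h1, h2⟩
          have hβα : β ≤ α := le_trans h2 (hF_le_α s hs)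
          exact ⟨Or.inl ⟨⟨h1, hβα⟩, h2⟩, h1, hβα⟩
      rw [show f ⁻¹' Iic s ∩ Ioc 0 α = {β | f β ≤ s} ∩ Ioc 0 α from rfl] at hset
      rw [hset, Real.volume_Ioc, sub_zero, ENNReal.ofReal_toReal (measure_ne_top _ _)]
    -- finiteness
    have hfin : ∫⁻ s in Iio ystar, μ {ω | X ω ≤ s} < ⊤ := by
      rw [← hcalcA]
      exact (hmax_int ystar).lintegral_lt_top
    -- the Bochner integral of the max equals toReal of the lintegral
    have hMs : ∫ ω, max (ystar - X ω) 0 ∂μ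
        = (∫⁻ s in Iio ystar, μ {ω | X ω ≤ s}).toReal := by
      have hnn : 0 ≤ᵐ[μ] fun ω => max (ystar - X ω) 0 :=
        Filter.Eventually.of_forall fun ω => le_max_right _ _
      have := integral_eq_lintegral_of_nonneg_ae hnn (hmax_int ystar).aestronglyMeasurable
      rw [this, hcalcA]
    -- f = VaR a.e. on restriction
    have hf_ae : f =ᵐ[volume.restrict (Ioc 0 α)] (fun β => VaR μ X β) := by
      rw [Filter.EventuallyEq, ae_restrict_iff' measurableSet_Ioc]
      exact Filter.Eventually.of_forall fun β hβ => by
        simp only [hf_def]; rw [if_pos hβ]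
    have hf_nonneg : 0 ≤ᵐ[volume.restrict (Ioc 0 α)] fun β => ystar - f β := by
      have h0 : ∀ᵐ β ∂(volume.restrict (Ioc 0 α)), 0 ≤ ystar - f β := by
        rw [ae_restrict_iff' measurableSet_Ioc]
        refine Filter.Eventually.of_forall fun β hβ => ?_
        simp only [hf_def]
        rw [if_pos hβ, sub_nonneg]
        exact hVaR_le β hβ
      exact h0
    -- integrability of ystar - f on (0, α]
    have hint_f : IntegrableOn (fun β => ystar - f β) (Ioc 0 α) volume := by
      constructor
      · exact ((measurable_const.sub hf_meas).aestronglyMeasurable).restrict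
      · rw [hasFiniteIntegral_iff_ofReal hf_nonneg]
        rw [hcalcB]
        exact hfin
    have hint_val : ∫ β in Ioc 0 α, (ystar - f β)
        = (∫⁻ s in Iio ystar, μ {ω | X ω ≤ s}).toReal := by
      rw [integral_eq_lintegral_of_nonneg_ae hf_nonneg
        ((measurable_const.sub hf_meas).aestronglyMeasurable).restrict, hcalcB]
    -- integrability of VaR on (0, α]
    have hvol : volume (Ioc (0:ℝ) α) < ⊤ := by
      rw [Real.volume_Ioc]; exact ENNReal.ofReal_lt_top
    have hconst_int : IntegrableOn (fun _ : ℝ => ystar) (Ioc 0 α) volume :=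
      integrableOn_const hvol.ne
    have hint_g : IntegrableOn (fun β => ystar - f β) (Ioc 0 α) volume := hint_f
    have hVaR_int : IntegrableOn (fun β => VaR μ X β) (Ioc 0 α) volume := by
      have : IntegrableOn (fun β => ystar - (ystar - f β)) (Ioc 0 α) volume :=
        hconst_int.sub hint_g
      apply Integrable.congr this
      filter_upwards [hf_ae] with β hβ
      rw [← hβ]; ring
    have hconst_val : ∫ β in Ioc (0:ℝ) α, (ystar : ℝ) = α * ystar := by
      rw [setIntegral_const, measureReal_def, Real.volume_Ioc, sub_zero,
        ENNReal.toReal_ofReal hα0.le, smul_eq_mul]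
    have hVaR_val : ∫ β in Ioc (0:ℝ) α, VaR μ X β
        = α * ystar - (∫⁻ s in Iio ystar, μ {ω | X ω ≤ s}).toReal := by
      have h1 : ∫ β in Ioc (0:ℝ) α, VaR μ X β
          = ∫ β in Ioc (0:ℝ) α, (ystar - (ystar - f β)) := by
        apply setIntegral_congr_ae measurableSet_Ioc
        refine Filter.Eventually.of_forall fun β hβ => ?_
        simp only [hf_def]
        rw [if_pos hβ]
        ring
      rw [h1, integral_sub hconst_int hint_g, hconst_val, hint_val]
    rw [intervalIntegral.integral_of_le hα0.le, hVaR_val, hMs]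
    field_simp
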